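/- Let L₁, L₂ be complete lattices and let f : L₁ × L₂ → L₁ and g : L₁ × L₂ → L₂ be monotone. Then the first component of the least fixpoint of the monotone map (x, y) ↦ (f(x,y), g(x,y)) on the product lattice L₁ × L₂ equals the least fixpoint of the map x ↦ f(x, lfp(λy. g(x,y))) (Bekić property). -/

import Mathlib

theorem stmt9 {L₁ L₂ : Type*} [CompleteLattice L₁] [CompleteLattice L₂]
    (f : L₁ × L₂ → L₁) (g : L₁ × L₂ → L₂) (hf : Monotone f) (hg : Monotone g) :
    (sInf {p : L₁ × L₂ | (f p, g p) ≤ p}).1 =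
      sInf {x : L₁ | f (x, sInf {y : L₂ | g (x, y) ≤ y}) ≤ x} := by
  -- package everything as order homs
  set F : (L₁ × L₂) →o (L₁ × L₂) := ⟨fun p => (f p, g p), fun p q h => ⟨hf h, hg h⟩⟩ with hF
  set G : L₁ → L₂ →o L₂ := fun x => ⟨fun y => g (x, y), fun y y' h => hg ⟨le_refl x, h⟩⟩ with hG
  have hk : ∀ x, sInf {y : L₂ | g (x, y) ≤ y} = OrderHom.lfp (G x) := fun x => rfl
  have hkmono : Monotone fun x => OrderHom.lfp (G x) := by
    intro x x' hx
    apply OrderHom.lfp_le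
    calc g (x, OrderHom.lfp (G x')) ≤ g (x', OrderHom.lfp (G x')) := hg ⟨hx, le_rfl⟩
      _ = OrderHom.lfp (G x') := (G x').map_lfp
  set H : L₁ →o L₁ := ⟨fun x => f (x, OrderHom.lfp (G x)),
    fun x x' h => hf ⟨h, hkmono h⟩⟩ with hH
  have hA : sInf {p : L₁ × L₂ | (f p, g p) ≤ p} = OrderHom.lfp F := rfl
  have hB : sInf {x : L₁ | f (x, sInf {y : L₂ | g (x, y) ≤ y}) ≤ x} = OrderHom.lfp H := by
    simp only [hk]; rfl
  rw [hA, hB]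
  set a := OrderHom.lfp H with ha
  set b := OrderHom.lfp (G a) with hb
  have hfa : f (a, b) = a := H.map_lfp
  have hga : g (a, b) = b := (G a).map_lfp
  have hFab : OrderHom.lfp F ≤ (a, b) := F.lfp_le (le_of_eq (Prod.ext hfa hga))
  have hfix : F (OrderHom.lfp F) = OrderHom.lfp F := F.map_lfp
  have hf1 : f (OrderHom.lfp F) = (OrderHom.lfp F).1 := congrArg Prod.fst hfix
  have hg2 : g (OrderHom.lfp F) = (OrderHom.lfp F).2 := congrArg Prod.snd hfix
  have hk1 : OrderHom.lfp (G (OrderHom.lfp F).1) ≤ (OrderHom.lfp F).2 :=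
    OrderHom.lfp_le _ (le_of_eq hg2)
  have hge : a ≤ (OrderHom.lfp F).1 := by
    apply OrderHom.lfp_le
    calc f ((OrderHom.lfp F).1, OrderHom.lfp (G (OrderHom.lfp F).1))
        ≤ f ((OrderHom.lfp F).1, (OrderHom.lfp F).2) := hf ⟨le_rfl, hk1⟩
      _ = (OrderHom.lfp F).1 := by simpa using hf1
  exact le_antisymm hFab.1 hge
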